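/- Let n ∈ ℕ, X a type, and f : (Fin n → ℝ) → List ((Fin n → ℝ) × X) → ℝ a permutation-symmetric function, i.e., f s l = f (p_σ s) (l.map (fun (u, x) => (p_σ u, x))) for every permutation σ of Fin n, every s, and every list l. Let S be a finite set of coordinates (S : Finset (Fin n)) and l a list of pairs in (Fin n → ℝ) × X such that for every (u, x) in l and every i ∈ S, u i = 0. If w, z : Fin n → ℝ take values in {0,1}, their supports {i | w i ≠ 0} and {i | z i ≠ 0} are contained in S and have the same cardinality, then f z l = f w l. -/

import Mathlib

/-- The coordinate permutation induced by `σ : Equiv.Perm (Fin n)`: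
`(pcoord n σ x) (σ i) = x i`, i.e., `pcoord n σ x = x ∘ σ⁻¹`. -/
def pcoord (n : ℕ) (σ : Equiv.Perm (Fin n)) (x : Fin n → ℝ) : Fin n → ℝ :=
  x ∘ σ.symm

theorem stmt_6_aux (n : ℕ) (X : Type*)
    (f : (Fin n → ℝ) → List ((Fin n → ℝ) × X) → ℝ)
    (hsym : ∀ (σ : Equiv.Perm (Fin n)) (s : Fin n → ℝ)
      (l : List ((Fin n → ℝ) × X)),
      f s l = f (pcoord n σ s) (l.map fun p => (pcoord n σ p.1, p.2)))
    (S : Finset (Fin n)) (l : List ((Fin n → ℝ) × X))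
    (hl : ∀ p ∈ l, ∀ i ∈ S, p.1 i = 0)
    (w : Fin n → ℝ)
    (hw : ∀ i, w i = 0 ∨ w i = 1)
    (hwS : {i | w i ≠ 0} ⊆ (S : Set (Fin n)))
    (k : ℕ) :
    ∀ z : Fin n → ℝ, (∀ i, z i = 0 ∨ z i = 1) →
      {i | z i ≠ 0} ⊆ (S : Set (Fin n)) →
      {i | w i ≠ 0}.ncard = {i | z i ≠ 0}.ncard →
      (Finset.univ.filter (fun i => z i ≠ 0 ∧ w i = 0)).card = k →
      f z l = f w l := by
  induction k using Nat.strong_induction_on with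
  | _ k IH =>
  intro z hz hzS hcard hk
  by_cases hzero : (Finset.univ.filter (fun i => z i ≠ 0 ∧ w i = 0)).card = 0
  · -- supports coincide, hence z = w
    have hsub : {i | z i ≠ 0} ⊆ {i | w i ≠ 0} := by
      intro i hi
      rw [Finset.card_eq_zero, Finset.filter_eq_empty_iff] at hzero
      have := hzero (Finset.mem_univ i)
      simp only [not_and] at this
      intro hw0
      exact (this hi) hw0
    have heq : {i | z i ≠ 0} = {i | w i ≠ 0} :=
      Set.eq_of_subset_of_ncard_le hsub hcard.le (Set.toFinite _)
    have : z = w := by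
      funext i
      rcases hz i with h0 | h1
      · rcases hw i with g0 | g1
        · rw [h0, g0]
        · exfalso
          have : i ∈ {i | z i ≠ 0} := heq ▸ (by simp [g1] : i ∈ {i | w i ≠ 0})
          exact this h0
      · rcases hw i with g0 | g1
        · exfalso
          have : i ∈ {i | w i ≠ 0} := heq ▸ (by simp [h1] : i ∈ {i | z i ≠ 0})
          exact this g0
        · rw [h1, g1]
    rw [this]
  · -- pick a with z a ≠ 0, w a = 0 and b with w b ≠ 0, z b = 0; swap them
    have hApos : 0 < (Finset.univ.filter (fun i => z i ≠ 0 ∧ w i = 0)).card :=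
      Nat.pos_of_ne_zero hzero
    obtain ⟨a, ha⟩ := Finset.card_pos.mp hApos
    simp only [Finset.mem_filter, Finset.mem_univ, true_and] at ha
    obtain ⟨haz, haw⟩ := ha
    -- supports as finsets
    have hfz : {i | z i ≠ 0} = ↑(Finset.univ.filter (fun i => z i ≠ 0)) := by
      ext i; simp
    have hfw : {i | w i ≠ 0} = ↑(Finset.univ.filter (fun i => w i ≠ 0)) := by
      ext i; simp
    set A := Finset.univ.filter (fun i => z i ≠ 0) with hA
    set B := Finset.univ.filter (fun i => w i ≠ 0) with hB
    have hcard' : B.card = A.card := by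
      have := hcard
      rw [hfz, hfw, Set.ncard_coe_finset, Set.ncard_coe_finset] at this
      exact this
    -- find b ∈ B \ A
    have hBA : (B \ A).Nonempty := by
      by_contra hne
      rw [Finset.not_nonempty_iff_eq_empty, Finset.sdiff_eq_empty_iff_subset] at hne
      have hBsubA : B ⊆ A := hne
      have hAB : A = B := (Finset.eq_of_subset_of_card_le hBsubA (le_of_eq hcard'.symm)).symm
      have : a ∈ B := hAB ▸ (by simp [hA, haz] : a ∈ A)
      simp [hB] at this
      exact this haw
    obtain ⟨b, hb⟩ := hBA
    rw [Finset.mem_sdiff] at hb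
    obtain ⟨hbB, hbA⟩ := hb
    have hbw : w b ≠ 0 := by simpa [hB] using hbB
    have hbz : z b = 0 := by
      by_contra h; exact hbA (by simp [hA, h])
    have haS : a ∈ S := hzS haz
    have hbS : b ∈ S := hwS hbw
    have hab : a ≠ b := fun h => hbw (h ▸ haw)
    set σ : Equiv.Perm (Fin n) := Equiv.swap a b with hσ
    have hσsymm : σ.symm = σ := Equiv.symm_swap a b
    set z' : Fin n → ℝ := pcoord n σ z with hz'
    have hz'eval : ∀ i, z' i = z (σ i) := by
      intro i; rw [hz', pcoord, hσsymm]; rfl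
    -- the dataset is unchanged by σ
    have hlmap : (l.map fun p => (pcoord n σ p.1, p.2)) = l := by
      rw [show l = l.map id from (List.map_id l).symm]
      rw [List.map_map]
      apply List.map_congr_left
      intro p hp
      simp only [Function.comp_apply, id]
      have hfix : pcoord n σ p.1 = p.1 := by
        funext i
        rw [pcoord, hσsymm]
        simp only [Function.comp_apply, hσ]
        rcases eq_or_ne i a with hia | hia
        · rw [hia, Equiv.swap_apply_left, hl p hp b hbS, hl p hp a haS]
        · rcases eq_or_ne i b with hib | hib
          · rw [hib, Equiv.swap_apply_right, hl p hp a haS, hl p hp b hbS]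
          · rw [Equiv.swap_apply_of_ne_of_ne hia hib]
      rw [hfix]
    have hstep : f z l = f z' l := by
      rw [hsym σ z l, hlmap]
    -- z' properties
    have hz'01 : ∀ i, z' i = 0 ∨ z' i = 1 := fun i => (hz'eval i) ▸ hz (σ i)
    have hz'supp : {i | z' i ≠ 0} = σ ⁻¹' {i | z i ≠ 0} := by
      ext i; simp [hz'eval i]
    have hz'S : {i | z' i ≠ 0} ⊆ (S : Set (Fin n)) := by
      intro i hi
      rw [hz'supp] at hi
      have hσi : σ i ∈ S := hzS hi
      simp only [hσ] at hσi
      rcases eq_or_ne i a with rfl | hia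
      · exact haS
      · rcases eq_or_ne i b with rfl | hib
        · exact hbS
        · rwa [Equiv.swap_apply_of_ne_of_ne hia hib] at hσi
    have hz'card : {i | w i ≠ 0}.ncard = {i | z' i ≠ 0}.ncard := by
      rw [hz'supp, ← Equiv.image_symm_eq_preimage, hσsymm,
        Set.ncard_image_of_injective _ σ.injective]
      exact hcard
    -- the measure strictly decreases
    have hz'a : z' a = 0 := by rw [hz'eval, hσ, Equiv.swap_apply_left]; exact hbz
    have hssub : (Finset.univ.filter (fun i => z' i ≠ 0 ∧ w i = 0)) ⊂
        (Finset.univ.filter (fun i => z i ≠ 0 ∧ w i = 0)) := by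
      constructor
      · intro i hi
        simp only [Finset.mem_filter, Finset.mem_univ, true_and] at hi ⊢
        obtain ⟨hiz', hiw⟩ := hi
        rcases eq_or_ne i a with rfl | hia
        · exact absurd hz'a hiz'
        · rcases eq_or_ne i b with rfl | hib
          · exact absurd hiw hbw
          · rw [hz'eval, hσ, Equiv.swap_apply_of_ne_of_ne hia hib] at hiz'
            exact ⟨hiz', hiw⟩
      · intro hsub
        have := hsub (by simp [haz, haw] : a ∈ Finset.univ.filter (fun i => z i ≠ 0 ∧ w i = 0))
        simp only [Finset.mem_filter, Finset.mem_univ, true_and] at this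
        exact this.1 hz'a
    have hlt : (Finset.univ.filter (fun i => z' i ≠ 0 ∧ w i = 0)).card < k :=
      hk ▸ Finset.card_lt_card hssub
    rw [hstep]
    exact IH _ hlt z' hz'01 hz'S hz'card rfl

/-- a function `f` of a state and a dataset that is symmetric
under simultaneous coordinate permutations assigns the same value to any two
`{0,1}`-valued states whose supports lie in a coordinate set `S`, on which all
dataset states vanish, and have the same cardinality. -/
theorem stmt_6 (n : ℕ) (X : Type*)
    (f : (Fin n → ℝ) → List ((Fin n → ℝ) × X) → ℝ)
    (hsym : ∀ (σ : Equiv.Perm (Fin n)) (s : Fin n → ℝ)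
      (l : List ((Fin n → ℝ) × X)),
      f s l = f (pcoord n σ s) (l.map fun p => (pcoord n σ p.1, p.2)))
    (S : Finset (Fin n)) (l : List ((Fin n → ℝ) × X))
    (hl : ∀ p ∈ l, ∀ i ∈ S, p.1 i = 0)
    (w z : Fin n → ℝ)
    (hw : ∀ i, w i = 0 ∨ w i = 1) (hz : ∀ i, z i = 0 ∨ z i = 1)
    (hwS : {i | w i ≠ 0} ⊆ (S : Set (Fin n)))
    (hzS : {i | z i ≠ 0} ⊆ (S : Set (Fin n)))
    (hcard : {i | w i ≠ 0}.ncard = {i | z i ≠ 0}.ncard) :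
    f z l = f w l :=
  stmt_6_aux n X f hsym S l hl w hw hwS _ z hz hzS hcard rfl
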